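/- Let r, a be coprime positive integers with r ≥ 2 and ℓ = r/gcd(r,a+1). With Dedekind sums δ_{r,a,i} = (1/r) Σ_{ξ^r=1, ξ≠1} ξ^i/((1−ξ)(1−ξ^a)), one has δ_{r,a,(a+1)(ℓ−i)} = δ_{r,a,(a+1)(i+1)} for all integers i. Consequently, the vector (δ_i)_{0 ≤ i ≤ ℓ−1} defined by δ_i = ℓ(δ_{r,a,(a+1)(i+1)} − δ_{r,a,0}) satisfies δ_{ℓ−1−i} = δ_i (palindromicity) and δ_{ℓ−1} = 0. -/

import Mathlib

open Complex in
/-- The Dedekind sum `δ_{r,a,i} = (1/r) Σ_{ξ^r = 1, ξ ≠ 1} ξ^i/((1-ξ)(1-ξ^a))`,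
summing over the nontrivial complex `r`-th roots of unity `ξ = exp(2πi j/r)`,
`1 ≤ j ≤ r-1`. -/
noncomputable def dedekindSum (r a : ℕ) (i : ℤ) : ℂ :=
  (r : ℂ)⁻¹ * ∑ j ∈ Finset.Ico 1 r,
    (Complex.exp (2 * Real.pi * Complex.I * j / r)) ^ i /
      ((1 - Complex.exp (2 * Real.pi * Complex.I * j / r)) *
        (1 - (Complex.exp (2 * Real.pi * Complex.I * j / r)) ^ (a : ℕ)))

open Complex

lemma exp_pow_r {r : ℕ} (hr : r ≠ 0) (j : ℕ) :
    (Complex.exp (2 * Real.pi * Complex.I * j / r)) ^ (r : ℕ) = 1 := by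
  rw [← Complex.exp_nat_mul]
  have h : (r : ℂ) * (2 * Real.pi * Complex.I * j / r) = j * (2 * Real.pi * Complex.I) := by
    have : (r : ℂ) ≠ 0 := Nat.cast_ne_zero.mpr hr
    field_simp
  rw [h, Complex.exp_nat_mul, Complex.exp_two_pi_mul_I, one_pow]

lemma dedekindSum_congr (r a : ℕ) (hr : r ≠ 0) {i i' : ℤ} (h : (r : ℤ) ∣ (i' - i)) :
    dedekindSum r a i = dedekindSum r a i' := by
  unfold dedekindSum
  congr 1
  apply Finset.sum_congr rfl
  intro j _
  set z := Complex.exp (2 * Real.pi * Complex.I * j / r) with hz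
  have hz0 : z ≠ 0 := Complex.exp_ne_zero _
  obtain ⟨k, hk⟩ := h
  have h1 : i' = i + r * k := by linarith
  have hzr : z ^ (r : ℤ) = 1 := by
    rw [zpow_natCast, exp_pow_r hr]
  rw [h1, zpow_add₀ hz0, zpow_mul, hzr, one_zpow, mul_one]

lemma dedekindSum_symm (r a : ℕ) (hr : 2 ≤ r) (i : ℤ) :
    dedekindSum r a i = dedekindSum r a ((a : ℤ) + 1 - i) := by
  unfold dedekindSum
  congr 1
  refine Finset.sum_nbij' (fun j => r - j) (fun j => r - j) ?_ ?_ ?_ ?_ ?_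
  · intro j hj
    simp only [Finset.mem_Ico] at *
    omega
  · intro j hj
    simp only [Finset.mem_Ico] at *
    omega
  · intro j hj
    simp only [Finset.mem_Ico] at hj
    show r - (r - j) = j
    omega
  · intro j hj
    simp only [Finset.mem_Ico] at hj
    show r - (r - j) = j
    omega
  · intro j hj
    simp only [Finset.mem_Ico] at hj
    set z := Complex.exp (2 * Real.pi * Complex.I * j / r) with hzdef
    have hz0 : z ≠ 0 := Complex.exp_ne_zero _
    have hrc : (r : ℂ) ≠ 0 := Nat.cast_ne_zero.mpr (by omega)
    have hzz : Complex.exp (2 * Real.pi * Complex.I * ((r : ℕ) - j : ℕ) / r) = z⁻¹ := by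
      have hcast : (((r : ℕ) - j : ℕ) : ℂ) = (r : ℂ) - j := by
        push_cast [Nat.cast_sub (le_of_lt hj.2)]
        ring
      rw [hcast]
      have harg : 2 * Real.pi * Complex.I * ((r : ℂ) - j) / r
          = 2 * Real.pi * Complex.I + -(2 * Real.pi * Complex.I * j / r) := by
        field_simp
        ring
      rw [harg, Complex.exp_add, Complex.exp_neg, ← hzdef]
      rw [show (2 : ℂ) * Real.pi * Complex.I = 2 * ↑Real.pi * Complex.I from rfl]
      rw [Complex.exp_two_pi_mul_I, one_mul]
    rw [hzz]
    -- denominators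
    have hd : (1 - z⁻¹) * (1 - (z⁻¹) ^ (a : ℕ))
        = (z ^ ((a : ℕ) + 1))⁻¹ * ((1 - z) * (1 - z ^ (a : ℕ))) := by
      have h1 : (1 - z⁻¹) = -z⁻¹ * (1 - z) := by
        field_simp
        ring
      have h2 : (1 - (z⁻¹) ^ (a : ℕ)) = -(z ^ (a : ℕ))⁻¹ * (1 - z ^ (a : ℕ)) := by
        rw [inv_pow]
        field_simp
        ring
      rw [h1, h2]
      rw [pow_succ, mul_inv]
      ring_nf
    have key : z⁻¹ ^ ((a : ℤ) + 1 - i) / ((z ^ ((a : ℕ) + 1))⁻¹ * ((1 - z) * (1 - z ^ (a : ℕ))))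
        = z ^ i / ((1 - z) * (1 - z ^ (a : ℕ))) := by
      rw [inv_zpow, ← zpow_neg, div_eq_mul_inv, mul_inv, inv_inv, div_eq_mul_inv,
        ← zpow_natCast z ((a : ℕ) + 1), ← mul_assoc, ← zpow_add₀ hz0]
      congr 2
      push_cast
      ring
    rw [hd]
    exact key.symm

/-- With `ℓ = r / gcd (r, a+1)`, one has
`δ_{r,a,(a+1)(ℓ-i)} = δ_{r,a,(a+1)(i+1)}` for all integers `i`; consequently
the δ-vector `δ_i = ℓ (δ_{r,a,(a+1)(i+1)} - δ_{r,a,0})`, `0 ≤ i ≤ ℓ-1`, is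
palindromic (`δ_{ℓ-1-i} = δ_i`) and `δ_{ℓ-1} = 0`. -/
theorem stmt6 (r a : ℕ) (hr : 2 ≤ r) (ha : 0 < a) (hco : Nat.gcd r a = 1) :
    (∀ i : ℤ, dedekindSum r a ((a + 1) * ((r / Nat.gcd r (a + 1) : ℕ) - i)) =
        dedekindSum r a ((a + 1) * (i + 1))) ∧
    (∀ i : ℤ, 0 ≤ i → i ≤ (r / Nat.gcd r (a + 1) : ℕ) - 1 →
        ((r / Nat.gcd r (a + 1) : ℕ) : ℂ) *
            (dedekindSum r a ((a + 1) * (((r / Nat.gcd r (a + 1) : ℕ) - 1 - i) + 1)) -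
              dedekindSum r a 0) =
          ((r / Nat.gcd r (a + 1) : ℕ) : ℂ) *
            (dedekindSum r a ((a + 1) * (i + 1)) - dedekindSum r a 0)) ∧
    ((r / Nat.gcd r (a + 1) : ℕ) : ℂ) *
        (dedekindSum r a ((a + 1) * (((r / Nat.gcd r (a + 1) : ℕ) - 1) + 1)) -
          dedekindSum r a 0) = 0 := by
  have hr0 : r ≠ 0 := by omega
  set g := Nat.gcd r (a + 1) with hg
  set L : ℤ := ((r / g : ℕ) : ℤ) with hL
  have hdvd : (r : ℤ) ∣ ((a : ℤ) + 1) * L := by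
    have h1 : g ∣ a + 1 := Nat.gcd_dvd_right _ _
    have h2 : g ∣ r := Nat.gcd_dvd_left _ _
    obtain ⟨c, hc⟩ := h1
    have hN : r ∣ (a + 1) * (r / g) :=
      ⟨c, by rw [hc, mul_comm g c, mul_assoc, Nat.mul_div_cancel' h2]; ring⟩
    rw [hL]
    exact_mod_cast hN
  have key : ∀ i : ℤ, dedekindSum r a (((a : ℤ) + 1) * (L - i)) =
      dedekindSum r a (((a : ℤ) + 1) * (i + 1)) := by
    intro i
    have e1 : dedekindSum r a (((a : ℤ) + 1) * (L - i)) =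
        dedekindSum r a (-(((a : ℤ) + 1) * i)) := by
      refine dedekindSum_congr r a hr0 ?_
      rw [show -(((a : ℤ) + 1) * i) - ((a : ℤ) + 1) * (L - i) = -(((a : ℤ) + 1) * L) by ring]
      exact dvd_neg.mpr hdvd
    have e2 := dedekindSum_symm r a hr (((a : ℤ) + 1) * (i + 1))
    rw [show (a : ℤ) + 1 - ((a : ℤ) + 1) * (i + 1) = -(((a : ℤ) + 1) * i) by ring] at e2
    rw [e1, ← e2]
  refine ⟨key, ?_, ?_⟩
  · intro i _ _
    rw [show ((a : ℤ) + 1) * ((L - 1 - i) + 1) = ((a : ℤ) + 1) * (L - i) by ring, key i]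
  · have h0 : dedekindSum r a (((a : ℤ) + 1) * ((L - 1) + 1)) = dedekindSum r a 0 := by
      refine dedekindSum_congr r a hr0 ?_
      rw [show (0 : ℤ) - ((a : ℤ) + 1) * ((L - 1) + 1) = -(((a : ℤ) + 1) * L) by ring]
      exact dvd_neg.mpr hdvd
    rw [h0, sub_self, mul_zero]
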